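/- Let 𝒳 be a finite nonempty set and let p, q be probability mass functions on 𝒳 such that q(x) > 0 for all x ∈ 𝒳. Then D(p‖q) ≤ log₂(1/μ_q) · √(2 ln 2) · √(D(q‖p)), where μ_q = min_{x∈𝒳} q(x). (Appendix Lemma 6 of the paper.) -/

import Mathlib

open scoped ENNReal BigOperators

attribute [local instance] Classical.propDecidable

/-- Kullback–Leibler divergence (base 2) between two pmfs on a finite set,
valued in `[0, +∞]`, with `D(p‖q) = +∞` when `p` is not absolutely continuous
with respect to `q`, and the convention `0 · log(0/a) = 0`. -/
noncomputable def klDiv {α : Type*} [Fintype α] (p q : α → ℝ) : ℝ≥0∞ :=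
  if ∀ x, q x = 0 → p x = 0 then
    ENNReal.ofReal (∑ x, p x * Real.logb 2 (p x / q x))
  else ⊤

/-- A probability mass function on a finite set. -/
def IsPMF {α : Type*} [Fintype α] (p : α → ℝ) : Prop :=
  (∀ x, 0 ≤ p x) ∧ ∑ x, p x = 1

/-- Chord bound for the convex function `r ↦ r log r` on `[1, R]`. -/
lemma aux_mul_log_le {r R : ℝ} (h1 : 1 ≤ r) (hrR : r ≤ R) (hR1 : 1 < R) :
    r * Real.log r ≤ (r - 1) / (R - 1) * (R * Real.log R) := by
  set t := (r - 1) / (R - 1) with ht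
  have hR0 : (0:ℝ) < R - 1 := by linarith
  have ht0 : 0 ≤ t := div_nonneg (by linarith) hR0.le
  have ht1 : t ≤ 1 := by
    rw [ht, div_le_one hR0]; linarith
  have hsum : (1 - t) + t = 1 := by ring
  have hteq : t * (R - 1) = r - 1 := div_mul_cancel₀ _ hR0.ne'
  have hr : (1 - t) • (1:ℝ) + t • R = r := by
    simp only [smul_eq_mul]
    linear_combination hteq
  have := Real.convexOn_mul_log.2 (Set.mem_Ici.2 (by norm_num : (0:ℝ) ≤ 1))
    (Set.mem_Ici.2 (by linarith : (0:ℝ) ≤ R)) (by linarith : (0:ℝ) ≤ 1 - t) ht0 hsum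
  rw [hr] at this
  simpa [Real.log_one] using this

/-- Log-sum inequality. -/
lemma aux_log_sum {α : Type*} (t : Finset α) (p q : α → ℝ)
    (hp : ∀ x ∈ t, 0 < p x) (hq : ∀ x ∈ t, 0 < q x) :
    (∑ x ∈ t, q x) * Real.log ((∑ x ∈ t, q x) / (∑ x ∈ t, p x)) ≤
      ∑ x ∈ t, q x * Real.log (q x / p x) := by
  rcases t.eq_empty_or_nonempty with rfl | hne
  · simp
  set P := ∑ x ∈ t, p x with hP
  set Q := ∑ x ∈ t, q x with hQ
  have hP0 : 0 < P := Finset.sum_pos hp hne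
  have hQ0 : 0 < Q := Finset.sum_pos hq hne
  have hw : ∑ x ∈ t, p x / P = 1 := by
    rw [← Finset.sum_div, ← hP, div_self hP0.ne']
  have hJ := Real.convexOn_mul_log.map_sum_le (t := t) (w := fun x => p x / P)
    (p := fun x => q x / p x) (fun x hx => div_nonneg (hp x hx).le hP0.le) hw
    (fun x hx => Set.mem_Ici.2 (div_nonneg (hq x hx).le (hp x hx).le))
  simp only [smul_eq_mul] at hJ
  have hz : ∑ x ∈ t, p x / P * (q x / p x) = Q / P := by
    rw [hQ, Finset.sum_div]
    refine Finset.sum_congr rfl fun x hx => ?_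
    rw [div_mul_div_comm, mul_comm P (p x), mul_div_mul_left _ _ (hp x hx).ne']
  rw [hz] at hJ
  have hrhs : ∑ x ∈ t, p x / P * (q x / p x * Real.log (q x / p x)) =
      (∑ x ∈ t, q x * Real.log (q x / p x)) / P := by
    rw [Finset.sum_div]
    refine Finset.sum_congr rfl fun x hx => ?_
    have hpx : p x ≠ 0 := (hp x hx).ne'
    field_simp
  rw [hrhs] at hJ
  have := mul_le_mul_of_nonneg_left hJ hP0.le
  calc Q * Real.log (Q / P) = P * (Q / P * Real.log (Q / P)) := by
        field_simp
    _ ≤ P * ((∑ x ∈ t, q x * Real.log (q x / p x)) / P) := this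
    _ = ∑ x ∈ t, q x * Real.log (q x / p x) := by field_simp

/-- Binary Pinsker inequality (natural log). -/
lemma aux_binary_pinsker {a b : ℝ} (ha0 : 0 < a) (ha1 : a < 1) (hb0 : 0 < b) (hb1 : b < 1) :
    2 * (a - b) ^ 2 ≤ a * Real.log (a / b) + (1 - a) * Real.log ((1 - a) / (1 - b)) := by
  set g : ℝ → ℝ := fun x => a * Real.log a - a * Real.log x + (1 - a) * Real.log (1 - a)
      - (1 - a) * Real.log (1 - x) - 2 * (a - x) ^ 2 with hg
  have hderiv : ∀ x ∈ Set.Ioo (0:ℝ) 1, HasDerivAt g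
      (-(a / x) + (1 - a) / (1 - x) + 4 * (a - x)) x := by
    intro x hx
    have hx0 : x ≠ 0 := ne_of_gt hx.1
    have hx1 : (1:ℝ) - x ≠ 0 := by have := hx.2; intro h; linarith [h]
    have h1 : HasDerivAt (fun x : ℝ => Real.log x) x⁻¹ x := Real.hasDerivAt_log hx0
    have h2 : HasDerivAt (fun x : ℝ => Real.log (1 - x)) (-(1 - x)⁻¹) x := by
      have hin : HasDerivAt (fun x : ℝ => 1 - x) (-1) x := by
        exact (hasDerivAt_id' x).const_sub 1
      have := (Real.hasDerivAt_log hx1).comp x hin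
      exact this.congr_deriv (by ring)
    have h3 : HasDerivAt (fun x : ℝ => 2 * (a - x) ^ 2) (4 * (x - a)) x := by
      have hin : HasDerivAt (fun x : ℝ => a - x) (-1) x := by
        exact (hasDerivAt_id' x).const_sub a
      have := (hin.pow 2).const_mul (2:ℝ)
      exact this.congr_deriv (by ring)
    have := (((hasDerivAt_const x (a * Real.log a)).sub (h1.const_mul a)).add
        (hasDerivAt_const x ((1 - a) * Real.log (1 - a)))).sub (h2.const_mul (1 - a)) |>.sub h3
    exact this.congr_deriv (by ring)
  have hga : g a = 0 := by simp [hg]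
  have key : 0 ≤ g b := by
    rcases le_total a b with hab | hab
    · have hmono : MonotoneOn g (Set.Icc a b) := by
        refine monotoneOn_of_deriv_nonneg (convex_Icc a b) ?_ ?_ ?_
        · intro x hx
          have hx' : x ∈ Set.Ioo (0:ℝ) 1 := ⟨lt_of_lt_of_le ha0 hx.1, lt_of_le_of_lt hx.2 hb1⟩
          exact (hderiv x hx').continuousAt.continuousWithinAt
        · intro x hx
          rw [interior_Icc] at hx
          have hx' : x ∈ Set.Ioo (0:ℝ) 1 := ⟨lt_trans ha0 hx.1, lt_trans hx.2 hb1⟩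
          exact (hderiv x hx').differentiableAt.differentiableWithinAt
        · intro x hx
          rw [interior_Icc] at hx
          have hx' : x ∈ Set.Ioo (0:ℝ) 1 := ⟨lt_trans ha0 hx.1, lt_trans hx.2 hb1⟩
          rw [(hderiv x hx').deriv]
          have hx0 : 0 < x := hx'.1
          have hx1 : x < 1 := hx'.2
          have hxa : a ≤ x := hx.1.le
          have heq : -(a / x) + (1 - a) / (1 - x) + 4 * (a - x)
              = (x - a) * (2 * x - 1) ^ 2 / (x * (1 - x)) := by
            have hx0' : x ≠ 0 := ne_of_gt hx0
            have hx1' : (1:ℝ) - x ≠ 0 := ne_of_gt (by linarith)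
            field_simp
            ring
          rw [heq]
          apply div_nonneg
          · exact mul_nonneg (by linarith) (sq_nonneg _)
          · nlinarith
      have := hmono (Set.left_mem_Icc.2 hab) (Set.right_mem_Icc.2 hab) hab
      rw [hga] at this; exact this
    · have hmono : AntitoneOn g (Set.Icc b a) := by
        refine antitoneOn_of_deriv_nonpos (convex_Icc b a) ?_ ?_ ?_
        · intro x hx
          have hx' : x ∈ Set.Ioo (0:ℝ) 1 := ⟨lt_of_lt_of_le hb0 hx.1, lt_of_le_of_lt hx.2 ha1⟩
          exact (hderiv x hx').continuousAt.continuousWithinAt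
        · intro x hx
          rw [interior_Icc] at hx
          have hx' : x ∈ Set.Ioo (0:ℝ) 1 := ⟨lt_trans hb0 hx.1, lt_trans hx.2 ha1⟩
          exact (hderiv x hx').differentiableAt.differentiableWithinAt
        · intro x hx
          rw [interior_Icc] at hx
          have hx' : x ∈ Set.Ioo (0:ℝ) 1 := ⟨lt_trans hb0 hx.1, lt_trans hx.2 ha1⟩
          rw [(hderiv x hx').deriv]
          have hx0 : 0 < x := hx'.1
          have hx1 : x < 1 := hx'.2
          have hxa : x ≤ a := hx.2.le
          have heq : -(a / x) + (1 - a) / (1 - x) + 4 * (a - x)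
              = (x - a) * (2 * x - 1) ^ 2 / (x * (1 - x)) := by
            have hx0' : x ≠ 0 := ne_of_gt hx0
            have hx1' : (1:ℝ) - x ≠ 0 := ne_of_gt (by linarith)
            field_simp
            ring
          rw [heq]
          apply div_nonpos_of_nonpos_of_nonneg
          · exact mul_nonpos_of_nonpos_of_nonneg (by linarith) (sq_nonneg _)
          · nlinarith
      have := hmono (Set.left_mem_Icc.2 hab) (Set.right_mem_Icc.2 hab) hab
      rw [hga] at this; exact this
  have hb0' : b ≠ 0 := hb0.ne'
  have hb1' : (1:ℝ) - b ≠ 0 := by intro h; linarith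
  have hexp : g b = a * Real.log (a / b) + (1 - a) * Real.log ((1 - a) / (1 - b))
      - 2 * (a - b) ^ 2 := by
    rw [hg]
    simp only
    rw [Real.log_div ha0.ne' hb0', Real.log_div (by linarith : (1:ℝ) - a ≠ 0) hb1']
    ring
  rw [hexp] at key
  linarith

lemma aux_sum_logb {α : Type*} [Fintype α] (f g : α → ℝ) :
    ∑ x, f x * Real.logb 2 (g x) = (∑ x, f x * Real.log (g x)) / Real.log 2 := by
  rw [Finset.sum_div]
  refine Finset.sum_congr rfl fun x _ => ?_
  rw [← Real.log_div_log]
  ring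

lemma aux_main_real {𝒳 : Type*} [Fintype 𝒳] [Nonempty 𝒳] (p q : 𝒳 → ℝ)
    (hp : IsPMF p) (hq : IsPMF q)
    (hppos : ∀ x, 0 < p x) (hqpos : ∀ x, 0 < q x) (μ : ℝ)
    (hμle : ∀ x, μ ≤ q x) (hμpos : 0 < μ) (hμhalf : μ ≤ 1 / 2) :
    ∑ x, p x * Real.logb 2 (p x / q x) ≤
      Real.logb 2 μ⁻¹ * Real.sqrt (2 * Real.log 2) *
        Real.sqrt (∑ x, q x * Real.logb 2 (q x / p x)) := by
  have hlog2 : 0 < Real.log 2 := Real.log_pos one_lt_two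
  have hR2 : 2 ≤ μ⁻¹ := by
    have h1 : μ * μ⁻¹ = 1 := mul_inv_cancel₀ hμpos.ne'
    nlinarith [inv_pos.2 hμpos]
  have hlogR : 0 ≤ Real.log μ⁻¹ := Real.log_nonneg (by linarith)
  rw [aux_sum_logb p (fun x => p x / q x), aux_sum_logb q (fun x => q x / p x),
    ← Real.log_div_log]
  set Dpq := ∑ x, p x * Real.log (p x / q x) with hDpq
  set Dqp := ∑ x, q x * Real.log (q x / p x) with hDqp
  set S : Finset 𝒳 := Finset.univ.filter (fun x => q x ≤ p x) with hS
  set Sc : Finset 𝒳 := Finset.univ.filter (fun x => ¬ q x ≤ p x) with hSc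
  set Δ : ℝ := ∑ x ∈ S, (p x - q x) with hΔ
  have hΔ0 : 0 ≤ Δ := Finset.sum_nonneg fun x hx => by
    rw [hS] at hx
    exact sub_nonneg.2 (Finset.mem_filter.1 hx).2
  have hGibbs : 0 ≤ Dqp := by
    have h := aux_log_sum Finset.univ p q (fun x _ => hppos x) (fun x _ => hqpos x)
    rw [hp.2, hq.2] at h
    simpa using h
  -- Step A : Dpq ≤ 2 log μ⁻¹ Δ
  have hA : Dpq ≤ 2 * Real.log μ⁻¹ * Δ := by
    have hsplit := Finset.sum_filter_add_sum_filter_not Finset.univ (fun x => q x ≤ p x)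
      (fun x => p x * Real.log (p x / q x))
    rw [← hS, ← hSc] at hsplit
    have hneg : ∑ x ∈ Sc, p x * Real.log (p x / q x) ≤ 0 := by
      apply Finset.sum_nonpos
      intro x hx
      rw [hSc] at hx
      have hxlt : p x < q x := not_le.1 (Finset.mem_filter.1 hx).2
      have hlog : Real.log (p x / q x) ≤ 0 :=
        Real.log_nonpos (div_nonneg (hppos x).le (hqpos x).le) ((div_le_one (hqpos x)).2 hxlt.le)
      exact mul_nonpos_of_nonneg_of_nonpos (hppos x).le hlog
    have hterm : ∀ x ∈ S, p x * Real.log (p x / q x) ≤ (p x - q x) * (2 * Real.log μ⁻¹) := by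
      intro x hx
      rw [hS] at hx
      have hqp : q x ≤ p x := (Finset.mem_filter.1 hx).2
      have hq0 := hqpos x
      have hr1 : 1 ≤ p x / q x := (one_le_div hq0).2 hqp
      have hp1 : p x ≤ 1 := by
        have h := Finset.single_le_sum (f := p) (fun i _ => (hppos i).le) (Finset.mem_univ x)
        rwa [hp.2] at h
      have hrR : p x / q x ≤ μ⁻¹ := by
        rw [div_le_iff₀ hq0]
        calc p x ≤ 1 := hp1
          _ = μ⁻¹ * μ := (inv_mul_cancel₀ hμpos.ne').symm
          _ ≤ μ⁻¹ * q x := by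
              exact mul_le_mul_of_nonneg_left (hμle x) (inv_pos.2 hμpos).le
      have hkey := aux_mul_log_le hr1 hrR (by linarith)
      have h2 := mul_le_mul_of_nonneg_left hkey hq0.le
      have hL : q x * (p x / q x * Real.log (p x / q x)) = p x * Real.log (p x / q x) := by
        field_simp
      have hRR : q x * ((p x / q x - 1) / (μ⁻¹ - 1) * (μ⁻¹ * Real.log μ⁻¹))
          = (p x - q x) * (μ⁻¹ * Real.log μ⁻¹ / (μ⁻¹ - 1)) := by
        have hq1 : q x * (p x / q x - 1) = p x - q x := by
          field_simp
        calc q x * ((p x / q x - 1) / (μ⁻¹ - 1) * (μ⁻¹ * Real.log μ⁻¹))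
            = q x * (p x / q x - 1) * (μ⁻¹ * Real.log μ⁻¹ / (μ⁻¹ - 1)) := by ring
          _ = (p x - q x) * (μ⁻¹ * Real.log μ⁻¹ / (μ⁻¹ - 1)) := by rw [hq1]
      rw [hL, hRR] at h2
      refine h2.trans ?_
      apply mul_le_mul_of_nonneg_left ?_ (by linarith : (0:ℝ) ≤ p x - q x)
      rw [div_le_iff₀ (by linarith : (0:ℝ) < μ⁻¹ - 1)]
      nlinarith [hlogR, hR2]
    calc Dpq = ∑ x ∈ S, p x * Real.log (p x / q x)
          + ∑ x ∈ Sc, p x * Real.log (p x / q x) := hsplit.symm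
      _ ≤ (∑ x ∈ S, (p x - q x) * (2 * Real.log μ⁻¹)) + 0 :=
          add_le_add (Finset.sum_le_sum hterm) hneg
      _ = 2 * Real.log μ⁻¹ * Δ := by
          rw [add_zero, hΔ, ← Finset.sum_mul]; ring
  -- Step B : Pinsker, 2 Δ² ≤ Dqp
  have hB : 2 * Δ ^ 2 ≤ Dqp := by
    have hsq := Finset.sum_filter_add_sum_filter_not Finset.univ (fun x => q x ≤ p x) q
    have hsp := Finset.sum_filter_add_sum_filter_not Finset.univ (fun x => q x ≤ p x) p
    rw [← hS, ← hSc, hq.2] at hsq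
    rw [← hS, ← hSc, hp.2] at hsp
    set a := ∑ x ∈ S, q x with ha
    set b := ∑ x ∈ S, p x with hb
    have hab : Δ = b - a := by rw [hΔ, Finset.sum_sub_distrib]
    by_cases hScE : Sc = ∅
    · rw [hScE, Finset.sum_empty, add_zero] at hsq hsp
      rw [hab, hsq, hsp]
      simpa using hGibbs
    · have hScne : Sc.Nonempty := Finset.nonempty_of_ne_empty hScE
      have hSne : S.Nonempty := by
        by_contra h
        rw [Finset.not_nonempty_iff_eq_empty] at h
        have hlt : ∑ x, p x < ∑ x, q x := by
          apply Finset.sum_lt_sum_of_nonempty Finset.univ_nonempty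
          intro x _
          by_contra hge
          push_neg at hge
          have hmem : x ∈ S := by
            rw [hS]
            exact Finset.mem_filter.2 ⟨Finset.mem_univ x, hge⟩
          rw [h] at hmem
          exact absurd hmem (Finset.notMem_empty x)
        rw [hp.2, hq.2] at hlt
        exact absurd hlt (lt_irrefl 1)
      have ha0 : 0 < a := Finset.sum_pos (fun x _ => hqpos x) hSne
      have hb0 : 0 < b := Finset.sum_pos (fun x _ => hppos x) hSne
      have haSc : 0 < ∑ x ∈ Sc, q x := Finset.sum_pos (fun x _ => hqpos x) hScne
      have hbSc : 0 < ∑ x ∈ Sc, p x := Finset.sum_pos (fun x _ => hppos x) hScne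
      have ha1 : a < 1 := by linarith
      have hb1 : b < 1 := by linarith
      have h1 := aux_log_sum S p q (fun x _ => hppos x) (fun x _ => hqpos x)
      have h2 := aux_log_sum Sc p q (fun x _ => hppos x) (fun x _ => hqpos x)
      have hsca : ∑ x ∈ Sc, q x = 1 - a := by linarith
      have hscb : ∑ x ∈ Sc, p x = 1 - b := by linarith
      rw [hsca, hscb] at h2
      have hpin := aux_binary_pinsker ha0 ha1 hb0 hb1
      have hDsplit := Finset.sum_filter_add_sum_filter_not Finset.univ (fun x => q x ≤ p x)
        (fun x => q x * Real.log (q x / p x))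
      rw [← hS, ← hSc] at hDsplit
      calc 2 * Δ ^ 2 = 2 * (a - b) ^ 2 := by rw [hab]; ring
        _ ≤ a * Real.log (a / b) + (1 - a) * Real.log ((1 - a) / (1 - b)) := hpin
        _ ≤ (∑ x ∈ S, q x * Real.log (q x / p x))
            + ∑ x ∈ Sc, q x * Real.log (q x / p x) := add_le_add h1 h2
        _ = Dqp := hDsplit
  -- combine
  have hΔsq : Δ ≤ Real.sqrt (Dqp / 2) := by
    rw [← Real.sqrt_sq hΔ0]
    apply Real.sqrt_le_sqrt
    linarith
  have hmain : Dpq ≤ Real.log μ⁻¹ * Real.sqrt (2 * Dqp) := by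
    have h4 : Real.sqrt 4 = 2 := by
      rw [show (4:ℝ) = 2 ^ 2 by norm_num]
      exact Real.sqrt_sq (by norm_num : (0:ℝ) ≤ 2)
    calc Dpq ≤ 2 * Real.log μ⁻¹ * Δ := hA
      _ ≤ 2 * Real.log μ⁻¹ * Real.sqrt (Dqp / 2) := by
          apply mul_le_mul_of_nonneg_left hΔsq (by positivity)
      _ = Real.log μ⁻¹ * (2 * Real.sqrt (Dqp / 2)) := by ring
      _ = Real.log μ⁻¹ * Real.sqrt (2 * Dqp) := by
          have h2s : Real.sqrt (2 * Dqp) = 2 * Real.sqrt (Dqp / 2) := by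
            rw [show (2:ℝ) * Dqp = 4 * (Dqp / 2) by ring,
              Real.sqrt_mul (by norm_num : (0:ℝ) ≤ 4), h4]
          rw [h2s]
  have hsq2 : Real.sqrt (2 * Real.log 2) * Real.sqrt (Dqp / Real.log 2)
      = Real.sqrt (2 * Dqp) := by
    rw [← Real.sqrt_mul (by positivity)]
    congr 1
    field_simp
  rw [mul_assoc, hsq2, div_mul_eq_mul_div]
  exact (div_le_div_iff_of_pos_right hlog2).2 hmain

/-- Appendix Lemma 6: `D(p‖q) ≤ log₂(1/μ_q) · √(2 ln 2) · √(D(q‖p))`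
where `μ_q = min_x q(x) > 0`. -/
theorem kl_le_log_mul_sqrt_kl_symm {𝒳 : Type*} [Fintype 𝒳] [Nonempty 𝒳]
    (p q : 𝒳 → ℝ) (hp : IsPMF p) (hq : IsPMF q) (hqpos : ∀ x, 0 < q x) :
    klDiv p q ≤
      ENNReal.ofReal
          (Real.logb 2 ((Finset.univ.inf' Finset.univ_nonempty q)⁻¹) *
            Real.sqrt (2 * Real.log 2)) *
        (klDiv q p) ^ (1 / 2 : ℝ) := by
  set μ := Finset.univ.inf' Finset.univ_nonempty q with hμdef
  have hμle : ∀ x, μ ≤ q x := fun x => Finset.inf'_le q (Finset.mem_univ x)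
  have hμpos : 0 < μ := by
    obtain ⟨x₀, _, hx₀⟩ := Finset.exists_mem_eq_inf' Finset.univ_nonempty q
    rw [hμdef, hx₀]
    exact hqpos x₀
  by_cases hcard : Fintype.card 𝒳 = 1
  · -- singleton case : both divergences vanish
    obtain ⟨x, hx⟩ := Fintype.card_eq_one_iff.mp hcard
    have hsump : ∑ y, p y = p x :=
      Finset.sum_eq_single_of_mem x (Finset.mem_univ x) (fun b _ hb => absurd (hx b) hb)
    have hsumq : ∑ y, q y = q x :=
      Finset.sum_eq_single_of_mem x (Finset.mem_univ x) (fun b _ hb => absurd (hx b) hb)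
    have hpx : p x = 1 := by rw [← hsump]; exact hp.2
    have hqx : q x = 1 := by rw [← hsumq]; exact hq.2
    have heval : ∑ y, p y * Real.logb 2 (p y / q y) = 0 := by
      rw [Finset.sum_eq_single_of_mem x (Finset.mem_univ x)
        (fun b _ hb => absurd (hx b) hb), hpx, hqx]
      norm_num
    rw [klDiv, if_pos (fun y hy => absurd hy (hqpos y).ne'), heval]
    simp
  · have hcard2 : 2 ≤ Fintype.card 𝒳 := by
      have := Fintype.card_pos (α := 𝒳)
      omega
    have hμhalf : μ ≤ 1 / 2 := by
      obtain ⟨x, y, hxy⟩ := Fintype.exists_pair_of_one_lt_card (lt_of_lt_of_le one_lt_two hcard2)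
      have hadd : μ + μ ≤ q x + q y := add_le_add (hμle x) (hμle y)
      have hsub : q x + q y ≤ ∑ z, q z := by
        have h := Finset.sum_le_sum_of_subset_of_nonneg
          (Finset.subset_univ ({x, y} : Finset 𝒳)) (fun z _ _ => (hqpos z).le)
        rwa [Finset.sum_pair hxy] at h
      rw [hq.2] at hsub
      linarith
    have hμ1 : 1 < μ⁻¹ := by
      have h1 : μ * μ⁻¹ = 1 := mul_inv_cancel₀ hμpos.ne'
      nlinarith [inv_pos.2 hμpos]
    have hc0 : 0 ≤ Real.logb 2 μ⁻¹ * Real.sqrt (2 * Real.log 2) :=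
      mul_nonneg (Real.logb_nonneg (by norm_num) hμ1.le) (Real.sqrt_nonneg _)
    by_cases hpz : ∀ x, p x ≠ 0
    · -- main case : everything finite
      have hppos : ∀ x, 0 < p x := fun x => lt_of_le_of_ne (hp.1 x) (Ne.symm (hpz x))
      have h1 : klDiv p q = ENNReal.ofReal (∑ x, p x * Real.logb 2 (p x / q x)) := by
        rw [klDiv, if_pos (fun y hy => absurd hy (hqpos y).ne')]
      have h2 : klDiv q p = ENNReal.ofReal (∑ x, q x * Real.logb 2 (q x / p x)) := by
        rw [klDiv, if_pos (fun y hy => absurd hy (hpz y))]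
      have hDqp0 : 0 ≤ ∑ x, q x * Real.logb 2 (q x / p x) := by
        rw [aux_sum_logb q (fun x => q x / p x)]
        apply div_nonneg _ (Real.log_nonneg (by norm_num))
        have h := aux_log_sum Finset.univ p q (fun x _ => hppos x) (fun x _ => hqpos x)
        rw [hp.2, hq.2] at h
        simpa using h
      rw [h1, h2, ENNReal.ofReal_rpow_of_nonneg hDqp0 (by norm_num : (0:ℝ) ≤ 1 / 2),
        ← ENNReal.ofReal_mul hc0]
      apply ENNReal.ofReal_le_ofReal
      rw [← Real.sqrt_eq_rpow]
      exact aux_main_real p q hp hq hppos hqpos μ hμle hμpos hμhalf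
    · -- some p x = 0 : the right-hand side is infinite
      push_neg at hpz
      obtain ⟨x, hx⟩ := hpz
      have hklqp : klDiv q p = ⊤ := by
        rw [klDiv, if_neg]
        push_neg
        exact ⟨x, hx, (hqpos x).ne'⟩
      have hcpos : (0:ℝ) < Real.logb 2 μ⁻¹ * Real.sqrt (2 * Real.log 2) := by
        apply mul_pos (Real.logb_pos (by norm_num) hμ1)
        exact Real.sqrt_pos.2 (by positivity)
      rw [hklqp, ENNReal.top_rpow_of_pos (by norm_num : (0:ℝ) < 1 / 2), ENNReal.mul_top]
      · exact le_top
      · rw [Ne, ENNReal.ofReal_eq_zero, not_le]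
        exact hcpos
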